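/- Define, for real A and real m, the complex number K_m(A) = -e^{iπA} + e^{-iπA}·e^{4πmi/3} - e^{iπA}·e^{4πmi/3}. Let A₀, B₀ > 0 with A₀ + B₀ = 1. Then there exist δ > 0 and differentiable real-valued functions Θ₁(A,B), Θ₂(A,B) defined on {(A,B) : |A - A₀| + |B - B₀| < δ} such that Θ₁(A₀,B₀) = 1, Θ₂(A₀,B₀) = 2, and K_{Θ₂(A,B)}(A) + K_{Θ₁(A,B)}(B) = 0 for all (A,B) in that neighbourhood. Moreover, lim_{ε→0} (Θ₁(A₀, B₀ - ε) - 1)/ε = -(3/8)·(1 + √3·cot(πA₀)) and lim_{ε→0} (Θ₂(A₀, B₀ - ε) - 2)/ε = -(3/8)·(1 + √3·cot(πA₀)). -/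

import Mathlib

open Filter Topology

/-- The jump factor `K_m(A) = -e^{iπA} + e^{-iπA}e^{4πmi/3} - e^{iπA}e^{4πmi/3}`. -/
noncomputable def jumpK (m A : ℝ) : ℂ :=
  -Complex.exp (Complex.I * Real.pi * A) +
    Complex.exp (-(Complex.I * Real.pi * A)) * Complex.exp (4 * Real.pi * m * Complex.I / 3) -
    Complex.exp (Complex.I * Real.pi * A) * Complex.exp (4 * Real.pi * m * Complex.I / 3)

noncomputable def jc1 (p : ℝ × ℝ) : ℝ :=
  (Real.cos (Real.pi * (p.1 - p.2) / 2) ^ 2 + Real.sin (Real.pi * p.2) ^ 2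
      - Real.sin (Real.pi * p.1) ^ 2) /
    (2 * Real.sin (Real.pi * p.2) * Real.cos (Real.pi * (p.1 - p.2) / 2))

noncomputable def jc2 (p : ℝ × ℝ) : ℝ :=
  (Real.cos (Real.pi * (p.1 - p.2) / 2) ^ 2 + Real.sin (Real.pi * p.1) ^ 2
      - Real.sin (Real.pi * p.2) ^ 2) /
    (2 * Real.sin (Real.pi * p.1) * Real.cos (Real.pi * (p.1 - p.2) / 2))

noncomputable def jTh1 (p : ℝ × ℝ) : ℝ :=
  3 / (4 * Real.pi) * (Real.pi * (p.1 + p.2) / 2 + Real.pi / 2 + Real.arccos (jc1 p))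

noncomputable def jTh2 (p : ℝ × ℝ) : ℝ :=
  3 / (4 * Real.pi) *
    (Real.pi * (p.1 + p.2) / 2 + Real.pi / 2 + 2 * Real.pi - Real.arccos (jc2 p))

lemma jumpK_formula (m A : ℝ) :
    jumpK m A = -((Real.cos (Real.pi * A) : ℂ) + (Real.sin (Real.pi * A) : ℂ) * Complex.I)
      - 2 * (Real.sin (Real.pi * A) : ℂ) * Complex.I *
        ((Real.cos (4 * Real.pi * m / 3) : ℂ) + (Real.sin (4 * Real.pi * m / 3) : ℂ) * Complex.I) := by
  unfold jumpK
  have h1 : Complex.I * (Real.pi : ℂ) * (A : ℂ) = ((Real.pi * A : ℝ) : ℂ) * Complex.I := by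
    push_cast; ring
  have h2 : -(Complex.I * (Real.pi : ℂ) * (A : ℂ)) = ((-(Real.pi * A) : ℝ) : ℂ) * Complex.I := by
    push_cast; ring
  have h3 : 4 * (Real.pi : ℂ) * (m : ℂ) * Complex.I / 3
      = ((4 * Real.pi * m / 3 : ℝ) : ℂ) * Complex.I := by push_cast; ring
  rw [h2, h1, h3, Complex.exp_mul_I, Complex.exp_mul_I, Complex.exp_mul_I]
  simp only [← Complex.ofReal_cos, ← Complex.ofReal_sin, Real.cos_neg, Real.sin_neg]
  push_cast
  ring

lemma arccos_half : Real.arccos (1 / 2) = Real.pi / 3 := by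
  rw [← Real.cos_pi_div_three]
  exact Real.arccos_cos (by positivity) (by linarith [Real.pi_pos])

section base
set_option linter.unusedSectionVars false
variable {A₀ B₀ : ℝ} (hA₀ : 0 < A₀) (hB₀ : 0 < B₀) (hsum : A₀ + B₀ = 1)
include hA₀ hB₀ hsum

lemma sin_piA_pos : 0 < Real.sin (Real.pi * A₀) :=
  Real.sin_pos_of_pos_of_lt_pi (by positivity)
    (by nlinarith [Real.pi_pos])

lemma cosy_base : Real.cos (Real.pi * (A₀ - B₀) / 2) = Real.sin (Real.pi * A₀) := by
  have : Real.pi * (A₀ - B₀) / 2 = -(Real.pi / 2 - Real.pi * A₀) := by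
    have : B₀ = 1 - A₀ := by linarith
    rw [this]; ring
  rw [this, Real.cos_neg, Real.cos_pi_div_two_sub]

lemma siny_base : Real.sin (Real.pi * (A₀ - B₀) / 2) = -Real.cos (Real.pi * A₀) := by
  have : Real.pi * (A₀ - B₀) / 2 = -(Real.pi / 2 - Real.pi * A₀) := by
    have : B₀ = 1 - A₀ := by linarith
    rw [this]; ring
  rw [this, Real.sin_neg, Real.sin_pi_div_two_sub]

lemma sin_piB_base : Real.sin (Real.pi * B₀) = Real.sin (Real.pi * A₀) := by
  have h : Real.pi * B₀ = Real.pi - Real.pi * A₀ := by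
    rw [show B₀ = 1 - A₀ by linarith]; ring
  rw [h, Real.sin_pi_sub]

lemma cos_piB_base : Real.cos (Real.pi * B₀) = -Real.cos (Real.pi * A₀) := by
  have h : Real.pi * B₀ = Real.pi - Real.pi * A₀ := by
    rw [show B₀ = 1 - A₀ by linarith]; ring
  rw [h, Real.cos_pi_sub]

lemma jc1_base : jc1 (A₀, B₀) = 1 / 2 := by
  have hs := sin_piA_pos hA₀ hB₀ hsum
  unfold jc1
  simp only
  rw [cosy_base hA₀ hB₀ hsum, sin_piB_base hA₀ hB₀ hsum]
  field_simp
  ring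

lemma jc2_base : jc2 (A₀, B₀) = 1 / 2 := by
  have hs := sin_piA_pos hA₀ hB₀ hsum
  unfold jc2
  simp only
  rw [cosy_base hA₀ hB₀ hsum, sin_piB_base hA₀ hB₀ hsum]
  field_simp
  ring

lemma jTh1_base : jTh1 (A₀, B₀) = 1 := by
  have hπ := Real.pi_pos
  unfold jTh1
  rw [jc1_base hA₀ hB₀ hsum, arccos_half]
  simp only
  rw [show Real.pi * (A₀ + B₀) / 2 = Real.pi / 2 by rw [hsum]; ring]
  field_simp
  ring

lemma jTh2_base : jTh2 (A₀, B₀) = 2 := by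
  have hπ := Real.pi_pos
  unfold jTh2
  rw [jc2_base hA₀ hB₀ hsum, arccos_half]
  simp only
  rw [show Real.pi * (A₀ + B₀) / 2 = Real.pi / 2 by rw [hsum]; ring]
  field_simp
  ring

end base

lemma jumpK_sum_eq_zero (p : ℝ × ℝ)
    (hs : 0 < Real.sin (Real.pi * p.1)) (ht : 0 < Real.sin (Real.pi * p.2))
    (hy : 0 < Real.cos (Real.pi * (p.1 - p.2) / 2))
    (h1 : jc1 p ∈ Set.Icc (-1 : ℝ) 1) (h2 : jc2 p ∈ Set.Icc (-1 : ℝ) 1) :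
    jumpK (jTh2 p) p.1 + jumpK (jTh1 p) p.2 = 0 := by
  have hπ := Real.pi_pos
  set x : ℝ := Real.pi * (p.1 + p.2) / 2 with hxdef
  set s : ℝ := Real.sin (Real.pi * p.1) with hsdef
  set t : ℝ := Real.sin (Real.pi * p.2) with htdef
  set cy : ℝ := Real.cos (Real.pi * (p.1 - p.2) / 2) with hcydef
  set c1 : ℝ := jc1 p with hc1def
  set c2 : ℝ := jc2 p with hc2def
  set a : ℝ := Real.arccos c2 with hadef
  set b : ℝ := Real.arccos c1 with hbdef
  -- exponent identities
  have hr2 : 4 * Real.pi * jTh2 p / 3 = x + Real.pi / 2 + 2 * Real.pi - a := by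
    unfold jTh2
    rw [← hc2def, ← hadef, ← hxdef]
    field_simp
  have hr1 : 4 * Real.pi * jTh1 p / 3 = x + Real.pi / 2 + b := by
    unfold jTh1
    rw [← hc1def, ← hbdef, ← hxdef]
    field_simp
  -- trig expansions
  have hcos2 : Real.cos (x + Real.pi / 2 + 2 * Real.pi - a)
      = Real.sin a * Real.cos x - Real.cos a * Real.sin x := by
    rw [show x + Real.pi / 2 + 2 * Real.pi - a = (x - a + Real.pi / 2) + 2 * Real.pi by ring,
      Real.cos_add_two_pi, Real.cos_add_pi_div_two, Real.sin_sub]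
    ring
  have hsin2 : Real.sin (x + Real.pi / 2 + 2 * Real.pi - a)
      = Real.cos a * Real.cos x + Real.sin a * Real.sin x := by
    rw [show x + Real.pi / 2 + 2 * Real.pi - a = (x - a + Real.pi / 2) + 2 * Real.pi by ring,
      Real.sin_add_two_pi, Real.sin_add_pi_div_two, Real.cos_sub]
    ring
  have hcos1 : Real.cos (x + Real.pi / 2 + b)
      = -(Real.sin x * Real.cos b + Real.cos x * Real.sin b) := by
    rw [show x + Real.pi / 2 + b = (x + b) + Real.pi / 2 by ring,
      Real.cos_add_pi_div_two, Real.sin_add]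
  have hsin1 : Real.sin (x + Real.pi / 2 + b)
      = Real.cos x * Real.cos b - Real.sin x * Real.sin b := by
    rw [show x + Real.pi / 2 + b = (x + b) + Real.pi / 2 by ring,
      Real.sin_add_pi_div_two, Real.cos_add]
  have hca : Real.cos a = c2 := Real.cos_arccos h2.1 h2.2
  have hcb : Real.cos b = c1 := Real.cos_arccos h1.1 h1.2
  -- key real identities
  have e1 : s * c2 + t * c1 = cy := by
    rw [hc1def, hc2def]; unfold jc1 jc2
    rw [← hsdef, ← htdef, ← hcydef]
    field_simp
    ring
  have e2 : s * Real.sin a = t * Real.sin b := by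
    have key : s ^ 2 * (1 - c2 ^ 2) = t ^ 2 * (1 - c1 ^ 2) := by
      rw [hc1def, hc2def]; unfold jc1 jc2
      rw [← hsdef, ← htdef, ← hcydef]
      field_simp
      ring
    rw [hadef, hbdef, Real.sin_arccos, Real.sin_arccos]
    calc s * Real.sqrt (1 - c2 ^ 2) = Real.sqrt (s ^ 2 * (1 - c2 ^ 2)) := by
          rw [Real.sqrt_mul (sq_nonneg s), Real.sqrt_sq hs.le]
      _ = Real.sqrt (t ^ 2 * (1 - c1 ^ 2)) := by rw [key]
      _ = t * Real.sqrt (1 - c1 ^ 2) := by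
          rw [Real.sqrt_mul (sq_nonneg t), Real.sqrt_sq ht.le]
  -- sum formulas
  have R1 : Real.cos (Real.pi * p.1) + Real.cos (Real.pi * p.2) = 2 * Real.cos x * cy := by
    rw [hcydef, hxdef,
      show Real.pi * p.1 = Real.pi * (p.1 + p.2) / 2 + Real.pi * (p.1 - p.2) / 2 by ring,
      show Real.pi * p.2 = Real.pi * (p.1 + p.2) / 2 - Real.pi * (p.1 - p.2) / 2 by ring,
      Real.cos_add, Real.cos_sub]
    ring
  have R2 : s + t = 2 * Real.sin x * cy := by
    rw [hsdef, htdef, hcydef, hxdef,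
      show Real.pi * p.1 = Real.pi * (p.1 + p.2) / 2 + Real.pi * (p.1 - p.2) / 2 by ring,
      show Real.pi * p.2 = Real.pi * (p.1 + p.2) / 2 - Real.pi * (p.1 - p.2) / 2 by ring,
      Real.sin_add, Real.sin_sub]
    ring
  rw [jumpK_formula, jumpK_formula, hr2, hr1, hcos2, hsin2, hcos1, hsin1, hca, hcb]
  have e1' : (s : ℂ) * c2 + t * c1 = cy := by exact_mod_cast e1
  have e2' : (s : ℂ) * (Real.sin a : ℝ) = (t : ℂ) * (Real.sin b : ℝ) := by exact_mod_cast e2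
  have R1' : ((Real.cos (Real.pi * p.1) : ℝ) : ℂ) + ((Real.cos (Real.pi * p.2) : ℝ) : ℂ)
      = 2 * (Real.cos x : ℝ) * (cy : ℝ) := by exact_mod_cast R1
  have R2' : ((s : ℝ) : ℂ) + ((t : ℝ) : ℂ) = 2 * (Real.sin x : ℝ) * (cy : ℝ) := by
    exact_mod_cast R2
  simp only [Complex.ofReal_mul, Complex.ofReal_add, Complex.ofReal_sub, Complex.ofReal_neg]
  linear_combination (-1 : ℂ) * R1' - Complex.I * R2'
    + (2 * ((Real.cos x : ℂ) + Complex.I * (Real.sin x : ℂ))) * e1'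
    + (2 * ((Real.sin x : ℂ) - Complex.I * (Real.cos x : ℂ))) * e2'
    + (-2 * (Real.sin x : ℂ) * (Complex.I ^ 2 + 1)) * e2'
    + (-2 * (Real.cos x : ℂ) * (Complex.I ^ 2 + 1)) * e1'
    + (-2 * (Real.cos x : ℂ) * (cy : ℂ)) * Complex.I_sq

lemma jc1_differentiableAt (p : ℝ × ℝ)
    (ht : 0 < Real.sin (Real.pi * p.2)) (hy : 0 < Real.cos (Real.pi * (p.1 - p.2) / 2)) :
    DifferentiableAt ℝ jc1 p := by
  have hnum : DifferentiableAt ℝ (fun q : ℝ × ℝ =>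
      Real.cos (Real.pi * (q.1 - q.2) / 2) ^ 2 + Real.sin (Real.pi * q.2) ^ 2
        - Real.sin (Real.pi * q.1) ^ 2) p := by fun_prop
  have hden : DifferentiableAt ℝ (fun q : ℝ × ℝ =>
      2 * Real.sin (Real.pi * q.2) * Real.cos (Real.pi * (q.1 - q.2) / 2)) p := by fun_prop
  have hne : (2 * Real.sin (Real.pi * p.2) * Real.cos (Real.pi * (p.1 - p.2) / 2)) ≠ 0 := by
    positivity
  unfold jc1
  simp only [div_eq_mul_inv]
  exact hnum.mul (hden.inv hne)

lemma jc2_differentiableAt (p : ℝ × ℝ)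
    (hs : 0 < Real.sin (Real.pi * p.1)) (hy : 0 < Real.cos (Real.pi * (p.1 - p.2) / 2)) :
    DifferentiableAt ℝ jc2 p := by
  have hnum : DifferentiableAt ℝ (fun q : ℝ × ℝ =>
      Real.cos (Real.pi * (q.1 - q.2) / 2) ^ 2 + Real.sin (Real.pi * q.1) ^ 2
        - Real.sin (Real.pi * q.2) ^ 2) p := by fun_prop
  have hden : DifferentiableAt ℝ (fun q : ℝ × ℝ =>
      2 * Real.sin (Real.pi * q.1) * Real.cos (Real.pi * (q.1 - q.2) / 2)) p := by fun_prop
  have hne : (2 * Real.sin (Real.pi * p.1) * Real.cos (Real.pi * (p.1 - p.2) / 2)) ≠ 0 := by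
    positivity
  unfold jc2
  simp only [div_eq_mul_inv]
  exact hnum.mul (hden.inv hne)

lemma jTh1_differentiableAt (p : ℝ × ℝ)
    (ht : 0 < Real.sin (Real.pi * p.2)) (hy : 0 < Real.cos (Real.pi * (p.1 - p.2) / 2))
    (h1 : jc1 p ∈ Set.Ioo (-1 : ℝ) 1) :
    DifferentiableAt ℝ jTh1 p := by
  have hjc := jc1_differentiableAt p ht hy
  have harc : DifferentiableAt ℝ (fun q => Real.arccos (jc1 q)) p :=
    (Real.differentiableAt_arccos.mpr ⟨ne_of_gt h1.1, ne_of_lt h1.2⟩).comp p hjc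
  have hlin : DifferentiableAt ℝ (fun q : ℝ × ℝ =>
      Real.pi * (q.1 + q.2) / 2 + Real.pi / 2) p := by fun_prop
  exact (hlin.add harc).const_mul _

lemma jTh2_differentiableAt (p : ℝ × ℝ)
    (hs : 0 < Real.sin (Real.pi * p.1)) (hy : 0 < Real.cos (Real.pi * (p.1 - p.2) / 2))
    (h2 : jc2 p ∈ Set.Ioo (-1 : ℝ) 1) :
    DifferentiableAt ℝ jTh2 p := by
  have hjc := jc2_differentiableAt p hs hy
  have harc : DifferentiableAt ℝ (fun q => Real.arccos (jc2 q)) p :=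
    (Real.differentiableAt_arccos.mpr ⟨ne_of_gt h2.1, ne_of_lt h2.2⟩).comp p hjc
  have hlin : DifferentiableAt ℝ (fun q : ℝ × ℝ =>
      Real.pi * (q.1 + q.2) / 2 + Real.pi / 2 + 2 * Real.pi) p := by fun_prop
  exact (hlin.sub harc).const_mul _

lemma jc1_continuousAt (p : ℝ × ℝ)
    (ht : 0 < Real.sin (Real.pi * p.2)) (hy : 0 < Real.cos (Real.pi * (p.1 - p.2) / 2)) :
    ContinuousAt jc1 p := (jc1_differentiableAt p ht hy).continuousAt

lemma jc2_continuousAt (p : ℝ × ℝ)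
    (hs : 0 < Real.sin (Real.pi * p.1)) (hy : 0 < Real.cos (Real.pi * (p.1 - p.2) / 2)) :
    ContinuousAt jc2 p := (jc2_differentiableAt p hs hy).continuousAt

lemma sqrt_one_sub_half_sq : Real.sqrt (1 - (1/2 : ℝ)^2) = Real.sqrt 3 / 2 := by
  rw [show (1 - (1/2 : ℝ)^2) = 3/4 by norm_num,
    show (3/4 : ℝ) = (Real.sqrt 3 / 2)^2 by
      rw [div_pow, Real.sq_sqrt (by norm_num : (3:ℝ) ≥ 0)]; norm_num]
  exact Real.sqrt_sq (by positivity)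

section deriv
variable {A₀ B₀ : ℝ} (hA₀ : 0 < A₀) (hB₀ : 0 < B₀) (hsum : A₀ + B₀ = 1)
include hA₀ hB₀ hsum

set_option linter.unusedSectionVars false

lemma jTh1_hasDerivAt :
    HasDerivAt (fun ε : ℝ => jTh1 (A₀, B₀ - ε))
      (-(3/8) * (1 + Real.sqrt 3 * Real.cot (Real.pi * A₀))) 0 := by
  have hπ := Real.pi_pos
  set s : ℝ := Real.sin (Real.pi * A₀) with hsdef
  set c : ℝ := Real.cos (Real.pi * A₀) with hcdef
  have hs : 0 < s := sin_piA_pos hA₀ hB₀ hsum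
  have E1 : Real.cos (Real.pi * (A₀ - (B₀ - 0)) / 2) = s := by
    rw [sub_zero]; exact cosy_base hA₀ hB₀ hsum
  have E2 : Real.sin (Real.pi * (A₀ - (B₀ - 0)) / 2) = -c := by
    rw [sub_zero]; exact siny_base hA₀ hB₀ hsum
  have E3 : Real.sin (Real.pi * (B₀ - 0)) = s := by
    rw [sub_zero]; exact sin_piB_base hA₀ hB₀ hsum
  have E4 : Real.cos (Real.pi * (B₀ - 0)) = -c := by
    rw [sub_zero]; exact cos_piB_base hA₀ hB₀ hsum
  have hB1 : HasDerivAt (fun ε : ℝ => B₀ - ε) (-1) 0 := by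
    simpa using (hasDerivAt_id (0:ℝ)).const_sub B₀
  have hYin : HasDerivAt (fun ε : ℝ => Real.pi * (A₀ - (B₀ - ε)) / 2) (Real.pi / 2) 0 := by
    have h := ((hB1.const_sub A₀).const_mul Real.pi).div_const 2
    exact h.congr_deriv (by ring)
  have hcosY : HasDerivAt (fun ε : ℝ => Real.cos (Real.pi * (A₀ - (B₀ - ε)) / 2))
      (c * (Real.pi / 2)) 0 := by
    have h := hYin.cos
    rw [E2] at h
    convert h using 1; ring
  have hNsq1 : HasDerivAt (fun ε : ℝ => Real.cos (Real.pi * (A₀ - (B₀ - ε)) / 2) ^ 2)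
      (Real.pi * s * c) 0 := by
    have h := hcosY.pow 2
    rw [E1] at h
    exact h.congr_deriv (by push_cast; ring)
  have hsinB : HasDerivAt (fun ε : ℝ => Real.sin (Real.pi * (B₀ - ε))) (Real.pi * c) 0 := by
    have hin : HasDerivAt (fun ε : ℝ => Real.pi * (B₀ - ε)) (-Real.pi) 0 := by
      have h := hB1.const_mul Real.pi
      exact h.congr_deriv (by ring)
    have h := hin.sin
    rw [E4] at h
    convert h using 1; ring
  have hNsq2 : HasDerivAt (fun ε : ℝ => Real.sin (Real.pi * (B₀ - ε)) ^ 2)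
      (2 * Real.pi * s * c) 0 := by
    have h := hsinB.pow 2
    rw [E3] at h
    exact h.congr_deriv (by push_cast; ring)
  have hnum : HasDerivAt (fun ε : ℝ =>
      Real.cos (Real.pi * (A₀ - (B₀ - ε)) / 2) ^ 2 + Real.sin (Real.pi * (B₀ - ε)) ^ 2
        - Real.sin (Real.pi * A₀) ^ 2) (3 * Real.pi * s * c) 0 := by
    have h := (hNsq1.add hNsq2).sub_const (Real.sin (Real.pi * A₀) ^ 2)
    exact h.congr_deriv (by ring)
  have hden : HasDerivAt (fun ε : ℝ =>
      2 * Real.sin (Real.pi * (B₀ - ε)) * Real.cos (Real.pi * (A₀ - (B₀ - ε)) / 2))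
      (3 * Real.pi * s * c) 0 := by
    have h := (hsinB.const_mul 2).mul hcosY
    rw [E1, E3] at h
    exact h.congr_deriv (by ring)
  have hden0 : 2 * Real.sin (Real.pi * (B₀ - 0)) * Real.cos (Real.pi * (A₀ - (B₀ - 0)) / 2) ≠ 0 := by
    rw [E1, E3]; positivity
  have hg : HasDerivAt (fun ε : ℝ => jc1 (A₀, B₀ - ε)) (3 * Real.pi * c / (4 * s)) 0 := by
    have h := hnum.div hden hden0
    refine h.congr_deriv ?_
    rw [E1, E3]
    field_simp
    ring
  have hg0 : jc1 (A₀, B₀ - 0) = 1 / 2 := by rw [sub_zero]; exact jc1_base hA₀ hB₀ hsum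
  have harc : HasDerivAt Real.arccos (-(1 / Real.sqrt (1 - (1/2 : ℝ) ^ 2))) (jc1 (A₀, B₀ - 0)) := by
    rw [hg0]
    exact Real.hasDerivAt_arccos (by norm_num) (by norm_num)
  have hac : HasDerivAt (fun ε : ℝ => Real.arccos (jc1 (A₀, B₀ - ε)))
      (-(1 / Real.sqrt (1 - (1/2 : ℝ) ^ 2)) * (3 * Real.pi * c / (4 * s))) 0 := harc.comp (h := fun ε : ℝ => jc1 (A₀, B₀ - ε)) 0 hg
  have hlin : HasDerivAt (fun ε : ℝ => Real.pi * (A₀ + (B₀ - ε)) / 2 + Real.pi / 2)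
      (-(Real.pi / 2)) 0 := by
    have h := (((hB1.const_add A₀).const_mul Real.pi).div_const 2).add_const (Real.pi / 2)
    exact h.congr_deriv (by ring)
  have htot := (hlin.add hac).const_mul (3 / (4 * Real.pi))
  refine htot.congr_deriv ?_
  rw [sqrt_one_sub_half_sq, Real.cot_eq_cos_div_sin, ← hsdef, ← hcdef]
  have hsq3 : Real.sqrt 3 * Real.sqrt 3 = 3 := Real.mul_self_sqrt (by norm_num)
  have h3 : (0:ℝ) < Real.sqrt 3 := by positivity
  field_simp
  ring_nf
  rw [Real.sq_sqrt (by norm_num : (0:ℝ) ≤ 3)]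
  ring

lemma jTh2_hasDerivAt :
    HasDerivAt (fun ε : ℝ => jTh2 (A₀, B₀ - ε))
      (-(3/8) * (1 + Real.sqrt 3 * Real.cot (Real.pi * A₀))) 0 := by
  have hπ := Real.pi_pos
  set s : ℝ := Real.sin (Real.pi * A₀) with hsdef
  set c : ℝ := Real.cos (Real.pi * A₀) with hcdef
  have hs : 0 < s := sin_piA_pos hA₀ hB₀ hsum
  have E1 : Real.cos (Real.pi * (A₀ - (B₀ - 0)) / 2) = s := by
    rw [sub_zero]; exact cosy_base hA₀ hB₀ hsum
  have E2 : Real.sin (Real.pi * (A₀ - (B₀ - 0)) / 2) = -c := by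
    rw [sub_zero]; exact siny_base hA₀ hB₀ hsum
  have E3 : Real.sin (Real.pi * (B₀ - 0)) = s := by
    rw [sub_zero]; exact sin_piB_base hA₀ hB₀ hsum
  have E4 : Real.cos (Real.pi * (B₀ - 0)) = -c := by
    rw [sub_zero]; exact cos_piB_base hA₀ hB₀ hsum
  have hB1 : HasDerivAt (fun ε : ℝ => B₀ - ε) (-1) 0 := by
    simpa using (hasDerivAt_id (0:ℝ)).const_sub B₀
  have hYin : HasDerivAt (fun ε : ℝ => Real.pi * (A₀ - (B₀ - ε)) / 2) (Real.pi / 2) 0 := by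
    have h := ((hB1.const_sub A₀).const_mul Real.pi).div_const 2
    exact h.congr_deriv (by ring)
  have hcosY : HasDerivAt (fun ε : ℝ => Real.cos (Real.pi * (A₀ - (B₀ - ε)) / 2))
      (c * (Real.pi / 2)) 0 := by
    have h := hYin.cos
    rw [E2] at h
    convert h using 1; ring
  have hNsq1 : HasDerivAt (fun ε : ℝ => Real.cos (Real.pi * (A₀ - (B₀ - ε)) / 2) ^ 2)
      (Real.pi * s * c) 0 := by
    have h := hcosY.pow 2
    rw [E1] at h
    exact h.congr_deriv (by push_cast; ring)
  have hsinB : HasDerivAt (fun ε : ℝ => Real.sin (Real.pi * (B₀ - ε))) (Real.pi * c) 0 := by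
    have hin : HasDerivAt (fun ε : ℝ => Real.pi * (B₀ - ε)) (-Real.pi) 0 := by
      have h := hB1.const_mul Real.pi
      exact h.congr_deriv (by ring)
    have h := hin.sin
    rw [E4] at h
    convert h using 1; ring
  have hNsq2 : HasDerivAt (fun ε : ℝ => Real.sin (Real.pi * (B₀ - ε)) ^ 2)
      (2 * Real.pi * s * c) 0 := by
    have h := hsinB.pow 2
    rw [E3] at h
    exact h.congr_deriv (by push_cast; ring)
  have hnum : HasDerivAt (fun ε : ℝ =>
      Real.cos (Real.pi * (A₀ - (B₀ - ε)) / 2) ^ 2 + Real.sin (Real.pi * A₀) ^ 2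
        - Real.sin (Real.pi * (B₀ - ε)) ^ 2) (-(Real.pi * s * c)) 0 := by
    have h := (hNsq1.add_const (Real.sin (Real.pi * A₀) ^ 2)).sub hNsq2
    exact h.congr_deriv (by ring)
  have hden : HasDerivAt (fun ε : ℝ =>
      2 * Real.sin (Real.pi * A₀) * Real.cos (Real.pi * (A₀ - (B₀ - ε)) / 2))
      (Real.pi * s * c) 0 := by
    have h := hcosY.const_mul (2 * Real.sin (Real.pi * A₀))
    refine h.congr_deriv ?_
    rw [← hsdef]; ring
  have hden0 : 2 * Real.sin (Real.pi * A₀) * Real.cos (Real.pi * (A₀ - (B₀ - 0)) / 2) ≠ 0 := by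
    rw [E1, ← hsdef]; positivity
  have hg : HasDerivAt (fun ε : ℝ => jc2 (A₀, B₀ - ε)) (-(3 * Real.pi * c) / (4 * s)) 0 := by
    have h := hnum.div hden hden0
    refine h.congr_deriv ?_
    rw [E1, E3, ← hsdef]
    field_simp
    ring
  have hg0 : jc2 (A₀, B₀ - 0) = 1 / 2 := by rw [sub_zero]; exact jc2_base hA₀ hB₀ hsum
  have harc : HasDerivAt Real.arccos (-(1 / Real.sqrt (1 - (1/2 : ℝ) ^ 2))) (jc2 (A₀, B₀ - 0)) := by
    rw [hg0]
    exact Real.hasDerivAt_arccos (by norm_num) (by norm_num)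
  have hac : HasDerivAt (fun ε : ℝ => Real.arccos (jc2 (A₀, B₀ - ε)))
      (-(1 / Real.sqrt (1 - (1/2 : ℝ) ^ 2)) * (-(3 * Real.pi * c) / (4 * s))) 0 := harc.comp (h := fun ε : ℝ => jc2 (A₀, B₀ - ε)) 0 hg
  have hlin : HasDerivAt (fun ε : ℝ => Real.pi * (A₀ + (B₀ - ε)) / 2 + Real.pi / 2 + 2 * Real.pi)
      (-(Real.pi / 2)) 0 := by
    have h := ((((hB1.const_add A₀).const_mul Real.pi).div_const 2).add_const
      (Real.pi / 2)).add_const (2 * Real.pi)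
    exact h.congr_deriv (by ring)
  have htot := (hlin.sub hac).const_mul (3 / (4 * Real.pi))
  refine htot.congr_deriv ?_
  rw [sqrt_one_sub_half_sq, Real.cot_eq_cos_div_sin, ← hsdef, ← hcdef]
  field_simp
  ring_nf
  rw [Real.sq_sqrt (by norm_num : (0:ℝ) ≤ 3)]
  ring

end deriv

/-- Local structure of the set `{K_m(A) + K_n(B) = 0}` near `(A₀, B₀, 1, 2)` with
`A₀ + B₀ = 1`: there are differentiable functions `Θ₁, Θ₂` with `Θ₁(A₀,B₀) = 1`,
`Θ₂(A₀,B₀) = 2`, `K_{Θ₂(A,B)}(A) + K_{Θ₁(A,B)}(B) = 0` near `(A₀,B₀)`, and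
`(Θᵢ(A₀,B₀-ε) - i)/ε → -(3/8)(1 + √3·cot(πA₀))` as `ε → 0`. -/
theorem jumpK_implicit_functions
    (A₀ B₀ : ℝ) (hA₀ : 0 < A₀) (hB₀ : 0 < B₀) (hsum : A₀ + B₀ = 1) :
    ∃ δ > (0 : ℝ), ∃ Θ₁ Θ₂ : ℝ × ℝ → ℝ,
      DifferentiableOn ℝ Θ₁ {p : ℝ × ℝ | |p.1 - A₀| + |p.2 - B₀| < δ} ∧
      DifferentiableOn ℝ Θ₂ {p : ℝ × ℝ | |p.1 - A₀| + |p.2 - B₀| < δ} ∧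
      Θ₁ (A₀, B₀) = 1 ∧ Θ₂ (A₀, B₀) = 2 ∧
      (∀ p : ℝ × ℝ, |p.1 - A₀| + |p.2 - B₀| < δ →
        jumpK (Θ₂ p) p.1 + jumpK (Θ₁ p) p.2 = 0) ∧
      Tendsto (fun ε : ℝ => (Θ₁ (A₀, B₀ - ε) - 1) / ε) (𝓝[≠] (0 : ℝ))
        (𝓝 (-(3/8) * (1 + Real.sqrt 3 * Real.cot (Real.pi * A₀)))) ∧
      Tendsto (fun ε : ℝ => (Θ₂ (A₀, B₀ - ε) - 2) / ε) (𝓝[≠] (0 : ℝ))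
        (𝓝 (-(3/8) * (1 + Real.sqrt 3 * Real.cot (Real.pi * A₀)))) := by

  have hπ := Real.pi_pos
  have hs0 : 0 < Real.sin (Real.pi * A₀) := sin_piA_pos hA₀ hB₀ hsum
  have ht0 : 0 < Real.sin (Real.pi * B₀) := by
    rw [sin_piB_base hA₀ hB₀ hsum]; exact hs0
  have hy0 : 0 < Real.cos (Real.pi * (A₀ - B₀) / 2) := by
    rw [cosy_base hA₀ hB₀ hsum]; exact hs0
  have c1 : ContinuousAt (fun p : ℝ × ℝ => Real.sin (Real.pi * p.1)) (A₀, B₀) := by fun_prop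
  have c2 : ContinuousAt (fun p : ℝ × ℝ => Real.sin (Real.pi * p.2)) (A₀, B₀) := by fun_prop
  have c3 : ContinuousAt (fun p : ℝ × ℝ => Real.cos (Real.pi * (p.1 - p.2) / 2)) (A₀, B₀) := by
    fun_prop
  have c4 : ContinuousAt jc1 (A₀, B₀) := jc1_continuousAt (A₀, B₀) ht0 hy0
  have c5 : ContinuousAt jc2 (A₀, B₀) := jc2_continuousAt (A₀, B₀) hs0 hy0
  have h1ev : ∀ᶠ p : ℝ × ℝ in 𝓝 (A₀, B₀), 0 < Real.sin (Real.pi * p.1) :=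
    c1.eventually_mem (isOpen_Ioi.mem_nhds hs0)
  have h2ev : ∀ᶠ p : ℝ × ℝ in 𝓝 (A₀, B₀), 0 < Real.sin (Real.pi * p.2) :=
    c2.eventually_mem (isOpen_Ioi.mem_nhds ht0)
  have h3ev : ∀ᶠ p : ℝ × ℝ in 𝓝 (A₀, B₀), 0 < Real.cos (Real.pi * (p.1 - p.2) / 2) :=
    c3.eventually_mem (isOpen_Ioi.mem_nhds hy0)
  have h4ev : ∀ᶠ p : ℝ × ℝ in 𝓝 (A₀, B₀), jc1 p ∈ Set.Ioo (-1 : ℝ) 1 := by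
    refine c4.eventually_mem ?_
    rw [jc1_base hA₀ hB₀ hsum]
    exact Ioo_mem_nhds (by norm_num) (by norm_num)
  have h5ev : ∀ᶠ p : ℝ × ℝ in 𝓝 (A₀, B₀), jc2 p ∈ Set.Ioo (-1 : ℝ) 1 := by
    refine c5.eventually_mem ?_
    rw [jc2_base hA₀ hB₀ hsum]
    exact Ioo_mem_nhds (by norm_num) (by norm_num)
  have hev := h1ev.and (h2ev.and (h3ev.and (h4ev.and h5ev)))
  rw [Metric.eventually_nhds_iff] at hev
  obtain ⟨δ, hδpos, hδ⟩ := hev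
  have hball : ∀ p : ℝ × ℝ, |p.1 - A₀| + |p.2 - B₀| < δ →
      0 < Real.sin (Real.pi * p.1) ∧ 0 < Real.sin (Real.pi * p.2) ∧
      0 < Real.cos (Real.pi * (p.1 - p.2) / 2) ∧
      jc1 p ∈ Set.Ioo (-1 : ℝ) 1 ∧ jc2 p ∈ Set.Ioo (-1 : ℝ) 1 := by
    intro p hp
    refine hδ ?_
    rw [Prod.dist_eq, Real.dist_eq, Real.dist_eq]
    have h1 := abs_nonneg (p.1 - A₀)
    have h2 := abs_nonneg (p.2 - B₀)
    exact max_lt (by linarith) (by linarith)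
  refine ⟨δ, hδpos, jTh1, jTh2, ?_, ?_, jTh1_base hA₀ hB₀ hsum, jTh2_base hA₀ hB₀ hsum,
    ?_, ?_, ?_⟩
  · intro p hp
    obtain ⟨_, hb, hc, hd, _⟩ := hball p hp
    exact (jTh1_differentiableAt p hb hc hd).differentiableWithinAt
  · intro p hp
    obtain ⟨ha, _, hc, _, he⟩ := hball p hp
    exact (jTh2_differentiableAt p ha hc he).differentiableWithinAt
  · intro p hp
    obtain ⟨ha, hb, hc, hd, he⟩ := hball p hp
    exact jumpK_sum_eq_zero p ha hb hc ⟨hd.1.le, hd.2.le⟩ ⟨he.1.le, he.2.le⟩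
  · have H := hasDerivAt_iff_tendsto_slope.mp (jTh1_hasDerivAt hA₀ hB₀ hsum)
    refine H.congr fun ε => ?_
    rw [slope_def_field]
    rw [show jTh1 (A₀, B₀ - 0) = 1 by rw [sub_zero]; exact jTh1_base hA₀ hB₀ hsum, sub_zero]
  · have H := hasDerivAt_iff_tendsto_slope.mp (jTh2_hasDerivAt hA₀ hB₀ hsum)
    refine H.congr fun ε => ?_
    rw [slope_def_field]
    rw [show jTh2 (A₀, B₀ - 0) = 2 by rw [sub_zero]; exact jTh2_base hA₀ hB₀ hsum, sub_zero]
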